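/- For fixed 0 < ϑ < 1, define ψ(θ) = ((1−ϑ)/(1−θ))^{1−θ} · (ϑ/θ)^{θ} for 0 < θ ≤ ϑ. Then ψ(ϑ) = 1, lim_{θ→0⁺} ψ(θ) = 1 − ϑ, and ψ is nondecreasing on (0, ϑ]. -/

import Mathlib

open Filter

/-- Properties of `ψ(θ) = ((1-ϑ)/(1-θ))^{1-θ} (ϑ/θ)^θ` on `(0, ϑ]`:
`ψ(ϑ) = 1`, `ψ(θ) → 1 - ϑ` as `θ → 0⁺`, and `ψ` is nondecreasing on `(0, ϑ]`. -/
theorem psi_properties (ϑ : ℝ) (hϑ0 : 0 < ϑ) (hϑ1 : ϑ < 1)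
    (ψ : ℝ → ℝ)
    (hψ : ∀ θ : ℝ, 0 < θ → θ ≤ ϑ →
      ψ θ = ((1 - ϑ) / (1 - θ)) ^ (1 - θ) * (ϑ / θ) ^ θ) :
    ψ ϑ = 1 ∧
    Tendsto ψ (nhdsWithin 0 (Set.Ioi 0)) (nhds (1 - ϑ)) ∧
    MonotoneOn ψ (Set.Ioc 0 ϑ) := by
  open Real in
  have h1ϑ : (0:ℝ) < 1 - ϑ := by linarith
  set f : ℝ → ℝ := fun θ => (1 - θ) * (Real.log (1 - ϑ) - Real.log (1 - θ))
      + (θ * Real.log ϑ - θ * Real.log θ) with hf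
  have key : ∀ θ : ℝ, 0 < θ → θ ≤ ϑ → ψ θ = Real.exp (f θ) := by
    intro θ h0 hθ
    have h1θ : (0:ℝ) < 1 - θ := by linarith
    rw [hψ θ h0 hθ, Real.rpow_def_of_pos (by positivity), Real.rpow_def_of_pos (by positivity),
      ← Real.exp_add, hf]
    congr 1
    rw [Real.log_div (by positivity) (by positivity), Real.log_div (by positivity) (by positivity)]
    ring
  refine ⟨?_, ?_, ?_⟩
  · rw [key ϑ hϑ0 le_rfl, hf]
    simp
  · have hev : ∀ᶠ θ in nhdsWithin (0:ℝ) (Set.Ioi 0), ψ θ = Real.exp (f θ) := by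
      filter_upwards [Ioo_mem_nhdsGT_of_mem (Set.left_mem_Ico.2 hϑ0)] with θ hθ
      exact key θ hθ.1 hθ.2.le
    have hflim : Tendsto f (nhdsWithin 0 (Set.Ioi 0)) (nhds (Real.log (1 - ϑ))) := by
      have h1 : Tendsto (fun θ : ℝ => (1 - θ) * (Real.log (1 - ϑ) - Real.log (1 - θ)))
          (nhdsWithin 0 (Set.Ioi 0)) (nhds (Real.log (1 - ϑ))) := by
        have : ContinuousAt (fun θ : ℝ => (1 - θ) * (Real.log (1 - ϑ) - Real.log (1 - θ))) 0 := by
          apply ContinuousAt.mul (by fun_prop)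
          exact ContinuousAt.sub continuousAt_const
            ((Real.continuousAt_log (by norm_num)).comp (by fun_prop))
        have := this.tendsto
        simp only [sub_zero, Real.log_one, sub_zero, mul_one] at this
        simpa using this.mono_left nhdsWithin_le_nhds
      have h2 : Tendsto (fun θ : ℝ => θ * Real.log ϑ - θ * Real.log θ)
          (nhdsWithin 0 (Set.Ioi 0)) (nhds 0) := by
        have ha : Tendsto (fun θ : ℝ => θ * Real.log ϑ) (nhds 0) (nhds 0) := by
          simpa using (continuous_mul_right (Real.log ϑ)).tendsto (0:ℝ)
        have hb : Tendsto (fun θ : ℝ => θ * Real.log θ) (nhds 0) (nhds 0) := by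
          simpa using continuous_mul_log.tendsto (0:ℝ)
        simpa using ((ha.sub hb).mono_left nhdsWithin_le_nhds)
      simpa using h1.add h2
    have : Tendsto (fun θ => Real.exp (f θ)) (nhdsWithin 0 (Set.Ioi 0))
        (nhds (Real.exp (Real.log (1 - ϑ)))) := (Real.continuous_exp.tendsto _).comp hflim
    rw [Real.exp_log h1ϑ] at this
    exact this.congr' (hev.mono fun θ h => h.symm)
  · have hmono : MonotoneOn f (Set.Ioc 0 ϑ) := by
      have hderiv : ∀ θ ∈ Set.Ioo (0:ℝ) ϑ, HasDerivAt f
          (Real.log (1 - θ) - Real.log (1 - ϑ) + (Real.log ϑ - Real.log θ)) θ := by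
        intro θ hθ
        have h0 : (0:ℝ) < θ := hθ.1
        have h1θ : (0:ℝ) < 1 - θ := by linarith [hθ.2]
        have d1 : HasDerivAt (fun x : ℝ => (1 - x) * (Real.log (1 - ϑ) - Real.log (1 - x)))
            ((-1) * (Real.log (1 - ϑ) - Real.log (1 - θ)) + (1 - θ) * (1 / (1 - θ))) θ := by
          have hlog : HasDerivAt (fun x : ℝ => Real.log (1 - x)) (-(1/(1-θ))) θ := by
            have := (Real.hasDerivAt_log h1θ.ne').comp θ
              ((hasDerivAt_const θ (1:ℝ)).sub (hasDerivAt_id θ))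
            simpa [div_eq_mul_inv, Function.comp_def] using this
          have := ((hasDerivAt_const θ (1:ℝ)).sub (hasDerivAt_id θ)).mul
            ((hasDerivAt_const θ (Real.log (1 - ϑ))).sub hlog)
          exact this.congr_deriv (by simp)
        have d2 : HasDerivAt (fun x : ℝ => x * Real.log ϑ - x * Real.log x)
            (Real.log ϑ - (Real.log θ + 1)) θ := by
          exact (hasDerivAt_mul_const (Real.log ϑ)).sub (Real.hasDerivAt_mul_log h0.ne')
        have := d1.add d2
        refine this.congr_deriv ?_
        field_simp
        ring
      apply monotoneOn_of_deriv_nonneg (convex_Ioc 0 ϑ)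
      · apply ContinuousOn.add
        · apply ContinuousOn.mul (by fun_prop)
          apply ContinuousOn.sub continuousOn_const
          apply Real.continuousOn_log.comp (by fun_prop)
          intro x hx
          have : x < 1 := lt_of_le_of_lt hx.2 hϑ1
          simp only [Set.mem_compl_iff, Set.mem_singleton_iff]
          intro h; linarith [h]
        · apply ContinuousOn.sub (by fun_prop)
          exact continuous_mul_log.continuousOn
      · intro θ hθ
        rw [interior_Ioc] at hθ
        exact ((hderiv θ hθ).differentiableAt).differentiableWithinAt
      · intro θ hθ
        rw [interior_Ioc] at hθ
        rw [(hderiv θ hθ).deriv]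
        have l1 : Real.log (1 - ϑ) ≤ Real.log (1 - θ) :=
          Real.log_le_log (by linarith) (by linarith [hθ.2])
        have l2 : Real.log θ ≤ Real.log ϑ := Real.log_le_log hθ.1 hθ.2.le
        linarith
    intro x hx y hy hxy
    rw [key x hx.1 hx.2, key y hy.1 hy.2]
    exact Real.exp_le_exp.2 (hmono hx hy hxy)
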